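/- (Necessary condition, dynamic form.) Let A be a solution of the proto-cell ODE, let b be a moiety combination that is not fed (bᵀf_nu = 0), and suppose there is λ_min > 0 such that λ(A(t)) ≥ λ_min for all t ≥ 0. Then bᵀA(t) ≤ bᵀA(0)·e^{−λ_min·t} for all t ≥ 0; in particular bᵀA(t) → 0 as t → ∞. -/

import Mathlib

open Matrix Filter

/-- Necessary condition, dynamic form: if a moiety combination `b` is
not fed and the growth rate is bounded below by `λ_min > 0`, then
`bᵀA(t) ≤ bᵀA(0)·e^(−λ_min t)` and `bᵀA(t) → 0`. -/
theorem protocell_unfed_moiety_decays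
    (N R : ℕ) (S : Matrix (Fin N) (Fin R) ℝ)
    (f : (Fin N → ℝ) → Fin R → ℝ) (hf_cont : Continuous f)
    (hf_nonneg : ∀ x : Fin N → ℝ, (∀ i, 0 ≤ x i) → ∀ j, 0 ≤ f x j)
    (me : Fin N) (Sme : Finset (Fin N)) (hme : me ∈ Sme)
    (Cme : ℝ) (hCme : 0 < Cme)
    (fme : (Fin N → ℝ) → ℝ) (hfme_cont : Continuous fme)
    (hfme_nonneg : ∀ x : Fin N → ℝ, (∀ i, 0 ≤ x i) → 0 ≤ fme x)
    (hfme_mono : ∀ x y : Fin N → ℝ, (∀ i, x i ≤ y i) → fme x ≤ fme y)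
    (hfme_pos : ∀ x : Fin N → ℝ, (∀ i, 0 ≤ x i) → (0 < fme x ↔ ∀ i ∈ Sme, 0 < x i))
    (Snu : Finset (Fin N)) (fnu : Fin N → ℝ)
    (hfnu_nonneg : ∀ i, 0 ≤ fnu i) (hfnu_supp : ∀ i ∉ Snu, fnu i = 0)
    (A : ℝ → Fin N → ℝ)
    (hA_nonneg : ∀ t ≥ (0:ℝ), ∀ i, 0 ≤ A t i)
    (hODE : ∀ t ≥ (0:ℝ), HasDerivWithinAt A
      (S.mulVec (f (A t)) + fnu - fme (A t) • (Pi.single me 1 : Fin N → ℝ)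
        - (fme (A t) / Cme) • A t) (Set.Ici 0) t)
    (b : Fin N → ℝ) (hb_ne : b ≠ 0) (hb_nonneg : ∀ i, 0 ≤ b i)
    (hbS : Matrix.vecMul b S = 0)
    (hb_unfed : b ⬝ᵥ fnu = 0)
    (lamMin : ℝ) (hlamMin : 0 < lamMin)
    (hlam : ∀ t ≥ (0:ℝ), lamMin ≤ fme (A t) / Cme) :
    (∀ t ≥ (0:ℝ), b ⬝ᵥ A t ≤ (b ⬝ᵥ A 0) * Real.exp (-lamMin * t)) ∧
      Tendsto (fun t => b ⬝ᵥ A t) atTop (nhds 0) := by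

  -- g t = b ⬝ᵥ A t
  set g : ℝ → ℝ := fun t => b ⬝ᵥ A t with hg
  have hg_nonneg : ∀ t ≥ (0:ℝ), 0 ≤ g t := by
    intro t ht
    exact Finset.sum_nonneg fun i _ => mul_nonneg (hb_nonneg i) (hA_nonneg t ht i)
  -- derivative of g
  have hg_deriv : ∀ t ≥ (0:ℝ), HasDerivWithinAt g
      (-(fme (A t)) * b me - (fme (A t) / Cme) * g t) (Set.Ici 0) t := by
    intro t ht
    have hD := hODE t ht
    have hcoord : ∀ i : Fin N, HasDerivWithinAt (fun s => A s i)
        ((S.mulVec (f (A t)) + fnu - fme (A t) • (Pi.single me 1 : Fin N → ℝ)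
          - (fme (A t) / Cme) • A t) i) (Set.Ici 0) t :=
      (hasDerivWithinAt_pi.1 hD)
    have hsum : HasDerivWithinAt (fun s => ∑ i, b i * A s i)
        (∑ i, b i * ((S.mulVec (f (A t)) + fnu - fme (A t) • (Pi.single me 1 : Fin N → ℝ)
          - (fme (A t) / Cme) • A t) i)) (Set.Ici 0) t :=
      HasDerivWithinAt.fun_sum fun i _ => (hcoord i).const_mul (b i)
    have hval : (∑ i, b i * ((S.mulVec (f (A t)) + fnu - fme (A t) • (Pi.single me 1 : Fin N → ℝ)
          - (fme (A t) / Cme) • A t) i))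
        = -(fme (A t)) * b me - (fme (A t) / Cme) * g t := by
      have h1 : (∑ i, b i * ((S.mulVec (f (A t)) + fnu
            - fme (A t) • (Pi.single me 1 : Fin N → ℝ)
            - (fme (A t) / Cme) • A t) i))
          = b ⬝ᵥ (S.mulVec (f (A t)) + fnu - fme (A t) • (Pi.single me 1 : Fin N → ℝ)
            - (fme (A t) / Cme) • A t) := rfl
      rw [h1, dotProduct_sub, dotProduct_sub, dotProduct_add, dotProduct_smul,
        dotProduct_smul, dotProduct_mulVec, hbS, hb_unfed]
      have h2 : b ⬝ᵥ (Pi.single me 1 : Fin N → ℝ) = b me := by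
        simp [dotProduct, Pi.single_apply, mul_ite, Finset.sum_ite_eq']
      rw [h2]
      simp [smul_eq_mul, hg]
    rw [← hval]
    exact hsum
  -- continuity of g on Ici 0
  have hg_cont : ContinuousOn g (Set.Ici 0) := fun t ht =>
    (hg_deriv t ht).continuousWithinAt
  -- h t = g t * exp (lamMin * t) is antitone on Ici 0
  set h : ℝ → ℝ := fun t => g t * Real.exp (lamMin * t) with hh
  have hexp_deriv : ∀ t : ℝ, HasDerivAt (fun s => Real.exp (lamMin * s))
      (lamMin * Real.exp (lamMin * t)) t := by
    intro t
    have := ((hasDerivAt_id t).const_mul lamMin).exp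
    simpa [mul_comm] using this
  have hh_deriv : ∀ t ≥ (0:ℝ), HasDerivWithinAt h
      ((-(fme (A t)) * b me - (fme (A t) / Cme) * g t) * Real.exp (lamMin * t)
        + g t * (lamMin * Real.exp (lamMin * t))) (Set.Ici 0) t :=
    fun t ht => (hg_deriv t ht).mul ((hexp_deriv t).hasDerivWithinAt)
  have hh_anti : AntitoneOn h (Set.Ici 0) := by
    apply antitoneOn_of_deriv_nonpos (convex_Ici 0)
    · exact hg_cont.mul (Real.continuous_exp.comp (continuous_const.mul continuous_id)).continuousOn
    · intro t ht
      rw [interior_Ici] at ht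
      exact (((hh_deriv t (le_of_lt ht)).hasDerivAt (Ici_mem_nhds ht)).differentiableAt).differentiableWithinAt
    · intro t ht
      rw [interior_Ici] at ht
      have ht' : (0:ℝ) ≤ t := le_of_lt ht
      have hd := (hh_deriv t ht').hasDerivAt (Ici_mem_nhds ht)
      rw [hd.deriv]
      have hfme0 : 0 ≤ fme (A t) := hfme_nonneg _ (hA_nonneg t ht')
      have hgt : 0 ≤ g t := hg_nonneg t ht'
      have hbme : 0 ≤ b me := hb_nonneg me
      have hle : lamMin * g t ≤ (fme (A t) / Cme) * g t :=
        mul_le_mul_of_nonneg_right (hlam t ht') hgt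
      have hexp : 0 < Real.exp (lamMin * t) := Real.exp_pos _
      have : (-(fme (A t)) * b me - (fme (A t) / Cme) * g t) + g t * lamMin ≤ 0 := by
        nlinarith
      nlinarith
  -- main inequality
  have hmain : ∀ t ≥ (0:ℝ), g t ≤ g 0 * Real.exp (-lamMin * t) := by
    intro t ht
    have := hh_anti (Set.self_mem_Ici) ht ht
    have h0 : h 0 = g 0 := by simp [hh]
    rw [h0] at this
    have hexp : (0:ℝ) < Real.exp (lamMin * t) := Real.exp_pos _
    have : g t ≤ g 0 / Real.exp (lamMin * t) := by
      rw [le_div_iff₀ hexp]; exact this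
    calc g t ≤ g 0 / Real.exp (lamMin * t) := this
      _ = g 0 * Real.exp (-lamMin * t) := by
          rw [neg_mul, Real.exp_neg, div_eq_mul_inv]
  constructor
  · exact hmain
  · have hlim : Tendsto (fun t : ℝ => g 0 * Real.exp (-lamMin * t)) atTop (nhds 0) := by
      have h1 : Tendsto (fun t : ℝ => -lamMin * t) atTop atBot :=
        tendsto_id.const_mul_atTop_of_neg (neg_neg_iff_pos.2 hlamMin)
      have h2 : Tendsto (fun t : ℝ => Real.exp (-lamMin * t)) atTop (nhds 0) :=
        Real.tendsto_exp_atBot.comp h1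
      simpa using h2.const_mul (g 0)
    exact squeeze_zero' ((eventually_ge_atTop (0:ℝ)).mono fun t ht => hg_nonneg t ht)
      ((eventually_ge_atTop (0:ℝ)).mono fun t ht => hmain t ht) hlim
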